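/- arXiv:2307.13498 — 3 statements merged into one kernel-verified Lean document; each statement's English description precedes it below -/
import Mathlib

section
/- Let q ∈ ℂ[z_1,…,z_n] be an irreducible Lee-Yang polynomial, let ℓ ∈ ℝ^n have positive, ℚ-linearly independent entries, and let Δ > 0. If q(z_1,…,z_n) = q(e^{iΔℓ_1}z_1,…,e^{iΔℓ_n}z_n) for all z ∈ ℂ^n, then q is a binomial, i.e. q has exactly two monomials with nonzero coefficients. -/
open MeasureTheory Filter Topology

noncomputable section

/-- A polynomial `p ∈ ℂ[z_1,…,z_n]` is Lee-Yang if it has no zeros in `𝔻^n`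
(all coordinates of absolute value `< 1`) and no zeros in `(ℂ ∖ cl 𝔻)^n`
(all coordinates of absolute value `> 1`). -/
def LeeYang {n : ℕ} (p : MvPolynomial (Fin n) ℂ) : Prop :=
  (∀ z : Fin n → ℂ, (∀ j, ‖z j‖ < 1) → MvPolynomial.eval z p ≠ 0) ∧
  (∀ z : Fin n → ℂ, (∀ j, 1 < ‖z j‖) → MvPolynomial.eval z p ≠ 0)

/-- The entire function `f_{p,ℓ}(x) = p(e^{ixℓ_1},…,e^{ixℓ_n})`. -/
def fpl {n : ℕ} (p : MvPolynomial (Fin n) ℂ) (ℓ : Fin n → ℝ) (x : ℂ) : ℂ :=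
  MvPolynomial.eval (fun j => Complex.exp (Complex.I * x * (ℓ j : ℂ))) p

/-- The multiplicity of `t` as a zero of `f_{p,ℓ}`: the least `k` such that the `k`-th
derivative of `f_{p,ℓ}` is nonzero at `t` (so `mult p ℓ t = 0` when `f_{p,ℓ}(t) ≠ 0`). -/
def mult {n : ℕ} (p : MvPolynomial (Fin n) ℂ) (ℓ : Fin n → ℝ) (t : ℝ) : ℕ :=
  sInf {k : ℕ | iteratedDeriv k (fpl p ℓ) (t : ℂ) ≠ 0}

/-- `x : ℤ → ℝ` is a nondecreasing bi-infinite enumeration of the zeros of `f_{p,ℓ}`,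
each zero repeated according to its multiplicity. -/
def IsZeroEnum {n : ℕ} (p : MvPolynomial (Fin n) ℂ) (ℓ : Fin n → ℝ) (x : ℤ → ℝ) : Prop :=
  Monotone x ∧
  ∀ t : ℝ, {j : ℤ | x j = t}.Finite ∧ {j : ℤ | x j = t}.ncard = mult p ℓ t

/-- `ρ` is the gap distribution of the nondecreasing sequence `x : ℤ → ℝ`: a Borel
probability measure such that for every bounded continuous `g : ℝ → ℝ`,
`(1/N) ∑_{j=1}^N g(x_{j+1} - x_j) → ∫ g dρ`. -/
def IsGapDist (x : ℤ → ℝ) (ρ : Measure ℝ) : Prop :=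
  IsProbabilityMeasure ρ ∧
  ∀ g : ℝ → ℝ, Continuous g → (∃ C : ℝ, ∀ t, |g t| ≤ C) →
    Tendsto (fun N : ℕ => (N : ℝ)⁻¹ * ∑ j ∈ Finset.Icc (1 : ℤ) (N : ℤ), g (x (j + 1) - x j))
      atTop (𝓝 (∫ t, g t ∂ρ))

open MvPolynomial
lemma aux_add_mem_support {n : ℕ} (F : (Fin n →₀ ℕ) → ℝ)
    (hadd : ∀ x y, F (x + y) = F x + F y) (hinj : Function.Injective F)
    {p s : MvPolynomial (Fin n) ℂ} {a b : Fin n →₀ ℕ}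
    (ha : a ∈ p.support) (hamax : ∀ x ∈ p.support, F x ≤ F a)
    (hb : b ∈ s.support) (hbmax : ∀ y ∈ s.support, F y ≤ F b) :
    a + b ∈ (p * s).support := by

  rw [MvPolynomial.mem_support_iff, MvPolynomial.coeff_mul]
  rw [Finset.sum_eq_single (a, b)]
  · exact mul_ne_zero (MvPolynomial.mem_support_iff.mp ha) (MvPolynomial.mem_support_iff.mp hb)
  · rintro ⟨x, y⟩ hxy hne
    rw [Finset.HasAntidiagonal.mem_antidiagonal] at hxy
    by_contra hc
    have hx : x ∈ p.support := by
      rw [MvPolynomial.mem_support_iff]; intro h0; rw [h0, zero_mul] at hc; exact hc rfl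
    have hy : y ∈ s.support := by
      rw [MvPolynomial.mem_support_iff]; intro h0; rw [h0, mul_zero] at hc; exact hc rfl
    have h1 : F x ≤ F a := hamax _ hx
    have h2 : F y ≤ F b := hbmax _ hy
    have h3 : F x + F y = F a + F b := by rw [← hadd, ← hadd, hxy]
    have hxa : x = a := hinj (le_antisymm h1 (by linarith))
    have hyb : y = b := hinj (le_antisymm h2 (by linarith))
    exact hne (by rw [hxa, hyb])
  · intro hna
    exact (hna (Finset.HasAntidiagonal.mem_antidiagonal.mpr rfl)).elim

lemma aux_spread_le {n : ℕ} (F : (Fin n →₀ ℕ) → ℝ)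
    (hadd : ∀ x y, F (x + y) = F x + F y) (hinj : Function.Injective F)
    {p r : MvPolynomial (Fin n) ℂ} (hr : r ≠ 0) (hdvd : p ∣ r)
    {x1 x2 : Fin n →₀ ℕ} (hx1 : x1 ∈ p.support) (hx2 : x2 ∈ p.support) :
    ∃ y1 ∈ r.support, ∃ y2 ∈ r.support, F x2 - F x1 ≤ F y2 - F y1 := by
  obtain ⟨s, rfl⟩ := hdvd
  have hs : s ≠ 0 := fun h => hr (by rw [h, mul_zero])
  have hsupp : s.support.Nonempty := by
    rw [Finset.nonempty_iff_ne_empty]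
    intro h; exact hs (MvPolynomial.support_eq_empty.mp h)
  have hpsupp : p.support.Nonempty := ⟨x1, hx1⟩
  obtain ⟨ap, hap, hapmax⟩ := Finset.exists_max_image p.support F hpsupp
  obtain ⟨bp, hbp, hbpmin⟩ := Finset.exists_min_image p.support F hpsupp
  obtain ⟨as', has', hasmax⟩ := Finset.exists_max_image s.support F hsupp
  obtain ⟨bs, hbs, hbsmin⟩ := Finset.exists_min_image s.support F hsupp
  refine ⟨bp + bs, ?_, ap + as', ?_, ?_⟩
  · exact aux_add_mem_support (fun x => -F x) (fun x y => by show -F (x+y) = -F x + -F y; rw [hadd]; ring)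
      (fun x y hxy => hinj (by simpa [neg_inj] using hxy))
      hbp (fun x hx => by simpa using hbpmin x hx)
      hbs (fun y hy => by simpa using hbsmin y hy)
  · exact aux_add_mem_support F hadd hinj hap hapmax has' hasmax
  · have h1 : F x2 ≤ F ap := hapmax _ hx2
    have h2 : F bp ≤ F x1 := hbpmin _ hx1
    have h3 : F bs ≤ F as' := hasmax _ hbs
    rw [hadd, hadd]
    linarith

lemma aux_bind_coeff {n : ℕ} (q : MvPolynomial (Fin n) ℂ) (lam : Fin n → ℂ) (α : Fin n →₀ ℕ) :
    MvPolynomial.coeff α (MvPolynomial.bind₁ (fun k => MvPolynomial.C (lam k) * MvPolynomial.X k) q)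
      = MvPolynomial.coeff α q * ∏ j ∈ α.support, lam j ^ α j := by
  have hrw : MvPolynomial.bind₁ (fun k => MvPolynomial.C (lam k) * MvPolynomial.X k) q
      = ∑ β ∈ q.support, MvPolynomial.monomial β (MvPolynomial.coeff β q * ∏ j ∈ β.support, lam j ^ β j) := by
    conv_lhs => rw [q.as_sum]
    rw [map_sum]
    refine Finset.sum_congr rfl fun β _ => ?_
    rw [MvPolynomial.bind₁_monomial]
    have : ∏ i ∈ β.support, (MvPolynomial.C (lam i) * MvPolynomial.X i) ^ β i
        = MvPolynomial.C (∏ j ∈ β.support, lam j ^ β j) * ∏ i ∈ β.support, (MvPolynomial.X i : MvPolynomial (Fin n) ℂ) ^ β i := by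
      rw [map_prod]
      rw [← Finset.prod_mul_distrib]
      refine Finset.prod_congr rfl fun i _ => ?_
      rw [mul_pow, map_pow]
    rw [this, ← mul_assoc, ← map_mul, MvPolynomial.monomial_eq]
    simp [Finsupp.prod]
  rw [hrw]
  rw [MvPolynomial.coeff_sum]
  simp only [MvPolynomial.coeff_monomial]
  rw [Finset.sum_ite_eq' q.support α]
  by_cases hα : α ∈ q.support
  · rw [if_pos hα]
  · rw [if_neg hα, MvPolynomial.notMem_support_iff.mp hα, zero_mul]

lemma aux_eval_bind {n : ℕ} (q : MvPolynomial (Fin n) ℂ) (lam : Fin n → ℂ) (z : Fin n → ℂ) :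
    MvPolynomial.eval z (MvPolynomial.bind₁ (fun k => MvPolynomial.C (lam k) * MvPolynomial.X k) q)
      = MvPolynomial.eval (fun k => lam k * z k) q := by
  have h1 : (MvPolynomial.eval z) ((MvPolynomial.bind₁ (fun k => MvPolynomial.C (lam k) * MvPolynomial.X k)) q)
      = (MvPolynomial.aeval z) ((MvPolynomial.bind₁ (fun k => MvPolynomial.C (lam k) * MvPolynomial.X k)) q) := by
    rw [MvPolynomial.aeval_def, MvPolynomial.eval]
    rfl
  rw [h1, MvPolynomial.aeval_bind₁]
  rw [MvPolynomial.aeval_def, MvPolynomial.eval]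
  simp

lemma aux_freq {n : ℕ} (q : MvPolynomial (Fin n) ℂ) (ℓ : Fin n → ℝ) (Δ : ℝ) (hΔ : 0 < Δ)
    (h : ∀ z : Fin n → ℂ,
      MvPolynomial.eval z q =
        MvPolynomial.eval (fun k => Complex.exp (Complex.I * (Δ : ℂ) * (ℓ k : ℂ)) * z k) q) :
    ∀ α ∈ q.support, ∃ m : ℤ, (∑ j, (α j : ℝ) * ℓ j) = m * (2 * Real.pi / Δ) := by
  set lam : Fin n → ℂ := fun k => Complex.exp (Complex.I * (Δ : ℂ) * (ℓ k : ℂ)) with hlam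
  have hq2 : q = MvPolynomial.bind₁ (fun k => MvPolynomial.C (lam k) * MvPolynomial.X k) q := by
    apply MvPolynomial.funext
    intro z
    rw [aux_eval_bind]
    exact h z
  intro α hα
  have hc := congrArg (MvPolynomial.coeff α) hq2
  rw [aux_bind_coeff] at hc
  have hcoeff : MvPolynomial.coeff α q ≠ 0 := MvPolynomial.mem_support_iff.mp hα
  have hone : (∏ j ∈ α.support, lam j ^ α j) = 1 := by
    apply mul_left_cancel₀ hcoeff
    rw [← hc, mul_one]
  have hexp : (∏ j ∈ α.support, lam j ^ α j)
      = Complex.exp (Complex.I * Δ * (∑ j ∈ α.support, (α j : ℂ) * (ℓ j : ℂ))) := by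
    rw [Finset.mul_sum, Complex.exp_sum]
    refine Finset.prod_congr rfl fun j _ => ?_
    rw [← Complex.exp_nat_mul]
    ring_nf
  rw [hexp, Complex.exp_eq_one_iff] at hone
  obtain ⟨m, hm⟩ := hone
  refine ⟨m, ?_⟩
  have hsum : (∑ j ∈ α.support, (α j : ℂ) * (ℓ j : ℂ)) = ((∑ j, (α j : ℝ) * ℓ j : ℝ) : ℂ) := by
    push_cast
    rw [Finset.sum_subset (Finset.subset_univ α.support)]
    intro x _ hx
    rw [Finsupp.notMem_support_iff.mp hx]
    simp
  rw [hsum] at hm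
  -- hm : I * Δ * (S : ℂ) = m * (2 * π * I)
  have hm2 : ((Δ * ∑ j, (α j : ℝ) * ℓ j : ℝ) : ℂ) = ((m * (2 * Real.pi) : ℝ) : ℂ) := by
    apply mul_left_cancel₀ Complex.I_ne_zero
    push_cast
    push_cast at hm
    linear_combination hm
  have hm3 : Δ * ∑ j, (α j : ℝ) * ℓ j = m * (2 * Real.pi) := by exact_mod_cast hm2
  field_simp
  linarith

lemma aux_WZ_inj {n : ℕ} (ℓ : Fin n → ℝ) (hind : LinearIndependent ℚ ℓ)
    (u u' : Fin n → ℤ) (huu : (∑ j, (u j : ℝ) * ℓ j) = ∑ j, (u' j : ℝ) * ℓ j) :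
    u = u' := by
  have key := Fintype.linearIndependent_iff.mp hind (fun j => ((u j - u' j : ℤ) : ℚ)) ?_
  · funext j
    have := key j
    have : ((u j - u' j : ℤ) : ℚ) = 0 := this
    exact_mod_cast sub_eq_zero.mp (by exact_mod_cast this)
  · simp only [Rat.smul_def]
    push_cast
    push_cast at huu
    simp only [sub_mul]
    rw [Finset.sum_sub_distrib, huu, sub_self]

lemma aux_W_inj {n : ℕ} (ℓ : Fin n → ℝ) (hind : LinearIndependent ℚ ℓ) :
    Function.Injective (fun α : Fin n →₀ ℕ => ∑ j, (α j : ℝ) * ℓ j) := by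
  intro α β hαβ
  have := aux_WZ_inj ℓ hind (fun j => (α j : ℤ)) (fun j => (β j : ℤ)) (by push_cast; push_cast at hαβ; exact hαβ)
  ext j
  have := congrFun this j
  exact_mod_cast this


lemma aux_line {n : ℕ} (ℓ : Fin n → ℝ) (hind : LinearIndependent ℚ ℓ)
    (c : ℝ) (hc : 0 < c) (S : Finset (Fin n →₀ ℕ)) (hS : 3 ≤ S.card)
    (m : (Fin n →₀ ℕ) → ℤ) (hm : ∀ α ∈ S, (∑ j, (α j : ℝ) * ℓ j) = m α * c) :
    ∃ (α₀ α₂ : Fin n →₀ ℕ) (g T : ℤ) (v : Fin n → ℤ), α₀ ∈ S ∧ α₂ ∈ S ∧ 0 < g ∧ 2 ≤ T ∧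
      (∑ j, (v j : ℝ) * ℓ j) = g * c ∧
      (∀ α ∈ S, ∃ t : ℤ, 0 ≤ t ∧ t ≤ T ∧ (∀ j, (α j : ℤ) = α₀ j + t * v j)) ∧
      (∀ j, (α₂ j : ℤ) = α₀ j + T * v j) := by
  have hSne : S.Nonempty := Finset.card_pos.mp (by omega)
  obtain ⟨α₀, hα₀S, hα₀min⟩ := Finset.exists_min_image S m hSne
  obtain ⟨α₂, hα₂S, hα₂max⟩ := Finset.exists_max_image S m hSne
  -- the additive hom
  set Φ : (Fin n → ℤ) →+ ℝ :=
    { toFun := fun u => ∑ j, (u j : ℝ) * ℓ j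
      map_zero' := by simp
      map_add' := by
        intro u v
        show (∑ j, ((u j + v j : ℤ) : ℝ) * ℓ j) = _
        rw [← Finset.sum_add_distrib]
        refine Finset.sum_congr rfl fun j _ => ?_
        push_cast; ring } with hΦ
  have hΦinj : Function.Injective Φ := fun u u' huu => aux_WZ_inj ℓ hind u u' huu
  set d : (Fin n →₀ ℕ) → (Fin n → ℤ) := fun α j => (α j : ℤ) - (α₀ j : ℤ) with hd
  set V : AddSubgroup (Fin n → ℤ) := AddSubgroup.closure (d '' (S : Set (Fin n →₀ ℕ))) with hV
  set K : AddSubgroup ℤ :=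
    (V.map Φ).comap ((AddMonoidHom.mulRight c).comp (Int.castAddHom ℝ)) with hK
  have hΦd : ∀ α ∈ S, Φ (d α) = (m α - m α₀ : ℤ) * c := by
    intro α hα
    have h1 : Φ (d α) = (∑ j, (α j : ℝ) * ℓ j) - ∑ j, ((α₀ j : ℕ) : ℝ) * ℓ j := by
      show (∑ j, ((d α) j : ℝ) * ℓ j) = _
      rw [← Finset.sum_sub_distrib]
      refine Finset.sum_congr rfl fun j _ => ?_
      show (((α j : ℤ) - (α₀ j : ℤ) : ℤ) : ℝ) * ℓ j = _
      push_cast; ring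
    rw [h1, hm α hα, hm α₀ hα₀S]
    push_cast; ring
  have hKmem : ∀ α ∈ S, (m α - m α₀) ∈ K := by
    intro α hα
    show ((((m α - m α₀ : ℤ) : ℝ)) * c) ∈ V.map Φ
    refine ⟨d α, AddSubgroup.subset_closure ⟨α, hα, rfl⟩, ?_⟩
    rw [hΦd α hα]
  obtain ⟨g₀, hg₀⟩ := Int.subgroup_cyclic K
  -- g₀ ∈ K gives vg₀
  have hg₀K : g₀ ∈ K := hg₀ ▸ AddSubgroup.mem_closure_singleton.mpr ⟨1, one_smul _ _⟩
  obtain ⟨v₀, hv₀V, hv₀Φ⟩ := hg₀K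
  simp only [AddMonoidHom.coe_comp, Function.comp_apply, Int.coe_castAddHom,
    AddMonoidHom.mulRight_apply] at hv₀Φ
  -- each k_α is a multiple of g₀
  have hmul : ∀ α ∈ S, ∃ t : ℤ, (m α - m α₀) = t * g₀ ∧ ∀ j, (α j : ℤ) = α₀ j + t * v₀ j := by
    intro α hα
    have := hKmem α hα
    rw [hg₀, AddSubgroup.mem_closure_singleton] at this
    obtain ⟨t, ht⟩ := this
    refine ⟨t, by rw [← ht, smul_eq_mul], ?_⟩
    have hΦeq : Φ (d α) = Φ (t • v₀) := by
      rw [hΦd α hα, map_zsmul, hv₀Φ, ← ht, zsmul_eq_mul, zsmul_eq_mul]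
      push_cast
      ring
    have := hΦinj hΦeq
    intro j
    have hj := congrFun this j
    have : (α j : ℤ) - α₀ j = t * v₀ j := hj
    omega
  -- m is injective on S
  have hminj : ∀ α ∈ S, ∀ β ∈ S, m α = m β → α = β := by
    intro α hα β hβ hmeq
    have h1 : (∑ j, (α j : ℝ) * ℓ j) = ∑ j, (β j : ℝ) * ℓ j := by
      rw [hm α hα, hm β hβ, hmeq]
    have := aux_WZ_inj ℓ hind (fun j => (α j : ℤ)) (fun j => (β j : ℤ))
      (by push_cast; push_cast at h1; exact h1)
    ext j
    exact_mod_cast congrFun this j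
  -- g₀ ≠ 0
  have hcard2 : ∃ α ∈ S, α ≠ α₀ := by
    by_contra hall
    push_neg at hall
    have : S ⊆ {α₀} := fun α hα => Finset.mem_singleton.mpr (hall α hα)
    have := Finset.card_le_card this
    simp at this
    omega
  obtain ⟨α1, hα1S, hα1ne⟩ := hcard2
  have hg₀ne : g₀ ≠ 0 := by
    intro hg0
    obtain ⟨t, ht, _⟩ := hmul α1 hα1S
    rw [hg0, mul_zero, sub_eq_zero] at ht
    exact hα1ne (hminj α1 hα1S α₀ hα₀S ht)
  -- normalize sign
  obtain ⟨g, v, hgpos, hgv, hgmul⟩ :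
      ∃ (g : ℤ) (v : Fin n → ℤ), 0 < g ∧ Φ v = g * c ∧
        ∀ α ∈ S, ∃ t : ℤ, (m α - m α₀) = t * g ∧ ∀ j, (α j : ℤ) = α₀ j + t * v j := by
    rcases lt_or_gt_of_ne hg₀ne with hneg | hpos
    · refine ⟨-g₀, -v₀, by omega, by rw [map_neg, hv₀Φ]; push_cast; ring, ?_⟩
      intro α hα
      obtain ⟨t, ht1, ht2⟩ := hmul α hα
      exact ⟨-t, by rw [ht1]; ring, fun j => by
        have := ht2 j
        simp only [Pi.neg_apply, neg_mul_neg]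
        omega⟩
    · exact ⟨g₀, v₀, hpos, hv₀Φ, hmul⟩
  -- T
  obtain ⟨T, hT1, hT2⟩ := hgmul α₂ hα₂S
  have hTnonneg : ∀ α ∈ S, ∀ t : ℤ, (m α - m α₀) = t * g → 0 ≤ t ∧ t ≤ T := by
    intro α hα t ht
    have h1 : 0 ≤ m α - m α₀ := by have := hα₀min α hα; omega
    have h2 : m α - m α₀ ≤ m α₂ - m α₀ := by have := hα₂max α hα; omega
    constructor
    · nlinarith
    · nlinarith
  -- T ≥ 2
  have hT2ge : 2 ≤ T := by
    by_contra hTlt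
    push_neg at hTlt
    have hTnn : 0 ≤ T := (hTnonneg α₂ hα₂S T hT1).1
    -- all t-values in {0, 1}; map α to t gives injection into Icc 0 1
    have hinj : Set.InjOn (fun α => m α - m α₀) S := by
      intro α hα β hβ heq
      simp only at heq
      exact hminj α hα β hβ (by omega)
    have hmapsto : ∀ α ∈ S, (m α - m α₀) ∈ ({0, g} : Finset ℤ) := by
      intro α hα
      obtain ⟨t, ht1, _⟩ := hgmul α hα
      obtain ⟨h0, hT'⟩ := hTnonneg α hα t ht1
      have ht01 : t = 0 ∨ t = 1 := by omega
      rcases ht01 with h | h <;> simp [ht1, h]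
    have hcard := Finset.card_le_card_of_injOn _ hmapsto hinj
    have h2 : ({0, g} : Finset ℤ).card ≤ 2 :=
      (Finset.card_insert_le _ _).trans (by simp)
    omega
  refine ⟨α₀, α₂, g, T, v, hα₀S, hα₂S, hgpos, hT2ge, hgv, ?_, hT2⟩
  intro α hα
  obtain ⟨t, ht1, ht2⟩ := hgmul α hα
  obtain ⟨h0, hT'⟩ := hTnonneg α hα t ht1
  exact ⟨t, h0, hT', ht2⟩

lemma aux_split {ι : Type*} (S : Finset ι) (cf : ι → ℂ) (τ : ι → ℕ) (T : ℕ)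
    (α₀ α₂ : ι) (h₀S : α₀ ∈ S) (h₂S : α₂ ∈ S)
    (hcf : ∀ α ∈ S, cf α ≠ 0) (hinj : Set.InjOn τ ↑S)
    (hτ0 : τ α₀ = 0) (hτ2 : τ α₂ = T) (hle : ∀ α ∈ S, τ α ≤ T) (hTpos : 0 < T) :
    ∃ M : Multiset ℂ, Multiset.card M = T ∧ (∀ ρ ∈ M, ρ ≠ 0) ∧
      ∀ u w : ℂ, (∑ α ∈ S, cf α * u ^ τ α * w ^ (T - τ α))
        = cf α₂ * (M.map fun ρ => u - ρ * w).prod := by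
  classical
  set f : Polynomial ℂ := ∑ α ∈ S, Polynomial.C (cf α) * Polynomial.X ^ τ α with hf
  have hcoeff : ∀ k : ℕ, f.coeff k = ∑ α ∈ S, if τ α = k then cf α else 0 := by
    intro k
    rw [hf, Polynomial.finset_sum_coeff]
    refine Finset.sum_congr rfl fun α _ => ?_
    rw [Polynomial.coeff_C_mul, Polynomial.coeff_X_pow]
    by_cases h : τ α = k
    · simp [h]
    · rw [if_neg h, if_neg (fun hk : k = τ α => h hk.symm), mul_zero]
  have hcT : f.coeff T = cf α₂ := by
    rw [hcoeff, Finset.sum_eq_single_of_mem α₂ h₂S]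
    · rw [if_pos hτ2]
    · intro β hβ hne
      rw [if_neg]
      intro hτβ
      exact hne (hinj hβ h₂S (by rw [hτβ, hτ2]))
  have hc0 : f.coeff 0 = cf α₀ := by
    rw [hcoeff, Finset.sum_eq_single_of_mem α₀ h₀S]
    · rw [if_pos hτ0]
    · intro β hβ hne
      rw [if_neg]
      intro hτβ
      exact hne (hinj hβ h₀S (by rw [hτβ, hτ0]))
  have hfne : f ≠ 0 := fun h0 => hcf α₂ h₂S (by rw [← hcT, h0, Polynomial.coeff_zero])
  have hdeg : f.natDegree = T := by
    apply le_antisymm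
    · apply Polynomial.natDegree_le_iff_coeff_eq_zero.mpr
      intro k hk
      rw [hcoeff]
      apply Finset.sum_eq_zero
      intro α hα
      rw [if_neg]
      intro hτα
      exact absurd (hτα ▸ hle α hα) (by omega)
    · exact Polynomial.le_natDegree_of_ne_zero (by rw [hcT]; exact hcf α₂ h₂S)
  have hsplits : f.Splits := IsAlgClosed.splits f
  have hcard : Multiset.card f.roots = T := by
    rw [Polynomial.splits_iff_card_roots.mp hsplits, hdeg]
  have hlc : f.leadingCoeff = cf α₂ := by
    rw [Polynomial.leadingCoeff, hdeg, hcT]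
  have hprod := hsplits.eq_prod_roots
  refine ⟨f.roots, hcard, ?_, ?_⟩
  · intro ρ hρ hρ0
    have := Polynomial.isRoot_of_mem_roots hρ
    rw [hρ0] at this
    have : f.coeff 0 = 0 := by
      rw [Polynomial.coeff_zero_eq_eval_zero]
      exact this
    rw [hc0] at this
    exact hcf α₀ h₀S this
  · intro u w
    by_cases hw : w = 0
    · subst hw
      rw [Finset.sum_eq_single_of_mem α₂ h₂S]
      · rw [hτ2, Nat.sub_self, pow_zero, mul_one]
        have : (Multiset.map (fun ρ => u - ρ * 0) f.roots) = Multiset.map (fun _ => u) f.roots := by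
          refine Multiset.map_congr rfl fun ρ _ => by ring
        rw [this, Multiset.map_const', Multiset.prod_replicate, hcard]
      · intro β hβ hne
        have hβT : τ β ≠ T := fun hτβ => hne (hinj hβ h₂S (by rw [hτβ, hτ2]))
        have : 0 < T - τ β := by have := hle β hβ; omega
        rw [zero_pow (by omega), mul_zero]
    · -- w ≠ 0
      have heval : f.eval (u / w) = ∑ α ∈ S, cf α * (u / w) ^ τ α := by
        rw [hf, Polynomial.eval_finset_sum]
        refine Finset.sum_congr rfl fun α _ => by simp
      have heval2 : f.eval (u / w)
          = cf α₂ * (Multiset.map (fun ρ => u / w - ρ) f.roots).prod := by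
        conv_lhs => rw [hprod]
        rw [Polynomial.eval_mul, Polynomial.eval_C, hlc, Polynomial.eval_multiset_prod,
          Multiset.map_map]
        congr 2
        refine Multiset.map_congr rfl fun ρ _ => by simp
      have hkey : (∑ α ∈ S, cf α * (u / w) ^ τ α) * w ^ T
          = cf α₂ * (Multiset.map (fun ρ => u / w - ρ) f.roots).prod * w ^ T := by
        rw [← heval, heval2]
      calc (∑ α ∈ S, cf α * u ^ τ α * w ^ (T - τ α))
          = (∑ α ∈ S, cf α * (u / w) ^ τ α) * w ^ T := by
            rw [Finset.sum_mul]
            refine Finset.sum_congr rfl fun α hα => ?_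
            have h1 : w ^ T = w ^ τ α * w ^ (T - τ α) := by
              rw [← pow_add]
              congr 1
              have := hle α hα
              omega
            rw [div_pow, h1]
            field_simp
        _ = cf α₂ * (Multiset.map (fun ρ => u / w - ρ) f.roots).prod * w ^ T := hkey
        _ = cf α₂ * (Multiset.map (fun ρ => u - ρ * w) f.roots).prod := by
            rw [mul_assoc]
            congr 1
            have hwT : (w : ℂ) ^ T = (Multiset.map (fun _ : ℂ => w) f.roots).prod := by
              rw [Multiset.map_const', Multiset.prod_replicate, hcard]
            rw [hwT, ← Multiset.prod_map_mul]
            congr 1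
            refine Multiset.map_congr rfl fun ρ _ => ?_
            field_simp

/-- If an irreducible Lee-Yang polynomial `q` satisfies
`q(z) = q(e^{iΔℓ_1}z_1,…,e^{iΔℓ_n}z_n)` for all `z ∈ ℂ^n`, where `Δ > 0` and `ℓ` has
positive `ℚ`-linearly independent entries, then `q` is a binomial (exactly two monomials
with nonzero coefficients). -/
theorem stmt_10 {n : ℕ} (q : MvPolynomial (Fin n) ℂ) (hq : LeeYang q)
    (hirr : Irreducible q)
    (ℓ : Fin n → ℝ) (hl : ∀ j, 0 < ℓ j) (hind : LinearIndependent ℚ ℓ)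
    (Δ : ℝ) (hΔ : 0 < Δ)
    (h : ∀ z : Fin n → ℂ,
      MvPolynomial.eval z q =
        MvPolynomial.eval (fun k => Complex.exp (Complex.I * (Δ : ℂ) * (ℓ k : ℂ)) * z k) q) :
    q.support.card = 2 := by
  have hq0 : q ≠ 0 := hirr.ne_zero
  have hsuppne : q.support.Nonempty := by
    rw [Finset.nonempty_iff_ne_empty]
    intro hemp
    exact hq0 (MvPolynomial.support_eq_empty.mp hemp)
  -- card ≠ 1
  have honeC : q.support.card ≠ 1 := by
    intro h1
    obtain ⟨α, hα⟩ := Finset.card_eq_one.mp h1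
    have hαmem : α ∈ q.support := by rw [hα]; exact Finset.mem_singleton_self α
    have hcα : MvPolynomial.coeff α q ≠ 0 := MvPolynomial.mem_support_iff.mp hαmem
    have hqeq : q = MvPolynomial.monomial α (MvPolynomial.coeff α q) := by
      conv_lhs => rw [q.as_sum]
      rw [hα, Finset.sum_singleton]
    by_cases hα0 : α = 0
    · subst hα0
      apply hirr.not_isUnit
      rw [hqeq, MvPolynomial.monomial_zero']
      exact (isUnit_iff_ne_zero.mpr hcα).map (MvPolynomial.C : ℂ →+* MvPolynomial (Fin n) ℂ)
    · obtain ⟨j, hj⟩ : ∃ j, α j ≠ 0 := by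
        by_contra hall; push_neg at hall
        exact hα0 (Finsupp.ext hall)
      apply hq.1 (fun _ => 0) (by intro j; simp)
      rw [hqeq, MvPolynomial.eval_monomial]
      apply mul_eq_zero_of_right
      exact Finset.prod_eq_zero (Finsupp.mem_support_iff.mpr hj) (zero_pow hj)
  -- frequencies
  set c : ℝ := 2 * Real.pi / Δ with hcdef
  have hc : 0 < c := by
    apply div_pos _ hΔ
    positivity
  have key1 := aux_freq q ℓ Δ hΔ h
  have hm' : ∀ α : Fin n →₀ ℕ, ∃ mm : ℤ, α ∈ q.support → (∑ j, (α j : ℝ) * ℓ j) = mm * c := by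
    intro α
    by_cases hα : α ∈ q.support
    · obtain ⟨mm, hmm⟩ := key1 α hα
      exact ⟨mm, fun _ => hmm⟩
    · exact ⟨0, fun hcc => absurd hcc hα⟩
  choose mf hmf using hm'
  -- card < 3
  have hthreeC : ¬ (3 ≤ q.support.card) := by
    intro hS3
    obtain ⟨α₀, α₂, g, T, v, hα₀S, hα₂S, hgpos, hTge2, hgv, hline, hα₂line⟩ :=
      aux_line ℓ hind c hc q.support hS3 mf (fun α hα => hmf α hα)
    -- weight function
    set W : (Fin n →₀ ℕ) → ℝ := fun α => ∑ j, (α j : ℝ) * ℓ j with hWdef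
    have hWadd : ∀ x y : Fin n →₀ ℕ, W (x + y) = W x + W y := by
      intro x y
      show (∑ j, ((x + y) j : ℝ) * ℓ j) = _
      rw [← Finset.sum_add_distrib]
      refine Finset.sum_congr rfl fun j _ => ?_
      rw [Finsupp.add_apply]
      push_cast; ring
    have hWinj : Function.Injective W := aux_W_inj ℓ hind
    have hgR : (0:ℝ) < (g:ℝ) := by exact_mod_cast hgpos
    have hgc : (0:ℝ) < (g:ℝ) * c := by positivity
    obtain ⟨j₀, hj₀⟩ : ∃ j, v j ≠ 0 := by
      by_contra hall; push_neg at hall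
      have hzero : (∑ j, (v j : ℝ) * ℓ j) = 0 := by
        apply Finset.sum_eq_zero; intro j _; rw [hall j]; simp
      rw [hzero] at hgv
      linarith
    set a : Fin n →₀ ℕ := Finsupp.equivFunOnFinite.symm (fun j => (v j).toNat) with hadef
    set b : Fin n →₀ ℕ := Finsupp.equivFunOnFinite.symm (fun j => (-v j).toNat) with hbdef
    have haj : ∀ j, a j = (v j).toNat := fun j => rfl
    have hbj : ∀ j, b j = (-v j).toNat := fun j => rfl
    have hab : ∀ j, (a j : ℤ) - (b j : ℤ) = v j := by
      intro j; rw [haj, hbj]; omega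
    -- the t function
    have hline' : ∀ α : Fin n →₀ ℕ, ∃ t : ℤ,
        α ∈ q.support → (0 ≤ t ∧ t ≤ T ∧ ∀ j, (α j : ℤ) = α₀ j + t * v j) := by
      intro α
      by_cases hα : α ∈ q.support
      · obtain ⟨t, ht⟩ := hline α hα; exact ⟨t, fun _ => ht⟩
      · exact ⟨0, fun hcc => absurd hcc hα⟩
    choose tf htf using hline'
    set τ : (Fin n →₀ ℕ) → ℕ := fun α => (tf α).toNat with hτdef
    set TN : ℕ := T.toNat with hTNdef
    have hTNT : (TN : ℤ) = T := Int.toNat_of_nonneg (by omega)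
    have hτval : ∀ α ∈ q.support, ((τ α : ℤ) = tf α) := by
      intro α hα
      exact Int.toNat_of_nonneg (htf α hα).1
    have hτle : ∀ α ∈ q.support, τ α ≤ TN := by
      intro α hα
      have h1 := (htf α hα).2.1
      have h2 := hτval α hα
      omega
    have hform : ∀ α ∈ q.support, ∀ j, (α j : ℤ) = α₀ j + (τ α : ℤ) * v j := by
      intro α hα j
      rw [hτval α hα]
      exact (htf α hα).2.2 j
    have hτinj : Set.InjOn τ ↑q.support := by
      intro α hα β hβ heq
      ext j
      have h1 := hform α hα j
      have h2 := hform β hβ j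
      rw [show τ α = τ β from heq] at h1
      have : (α j : ℤ) = (β j : ℤ) := by rw [h1, h2]
      exact_mod_cast this
    have hτ0 : τ α₀ = 0 := by
      have h1 := hform α₀ hα₀S j₀
      have h2 : ((τ α₀ : ℤ)) * v j₀ = 0 := by omega
      rcases mul_eq_zero.mp h2 with h3 | h3
      · exact_mod_cast h3
      · exact absurd h3 hj₀
    have hτ2 : τ α₂ = TN := by
      have h1 := hform α₂ hα₂S j₀
      have h2 := hα₂line j₀
      have h3 : ((τ α₂ : ℤ)) * v j₀ = T * v j₀ := by omega
      have h4 := mul_right_cancel₀ hj₀ h3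
      omega
    have hTNpos : 0 < TN := by omega
    obtain ⟨M, hMcard, hM0, hid⟩ := aux_split q.support (fun α => MvPolynomial.coeff α q)
      τ TN α₀ α₂ hα₀S hα₂S (fun α hα => MvPolynomial.mem_support_iff.mp hα)
      hτinj hτ0 hτ2 hτle hTNpos
    have hcα₂ : MvPolynomial.coeff α₂ q ≠ 0 := MvPolynomial.mem_support_iff.mp hα₂S
    -- the polynomial identity
    have hP : MvPolynomial.monomial (TN • b) (1:ℂ) * q
        = MvPolynomial.C (MvPolynomial.coeff α₂ q) * (MvPolynomial.monomial α₀ 1 *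
            (M.map fun ρ => (MvPolynomial.monomial a 1 : MvPolynomial (Fin n) ℂ)
              - MvPolynomial.C ρ * MvPolynomial.monomial b 1).prod) := by
      apply MvPolynomial.funext
      intro z
      rw [map_mul, MvPolynomial.eval_monomial, one_mul, MvPolynomial.eval_eq' z q]
      rw [map_mul, MvPolynomial.eval_C, map_mul, MvPolynomial.eval_monomial, one_mul]
      rw [map_multiset_prod, Multiset.map_map]
      rw [Finsupp.prod_pow, Finsupp.prod_pow]
      set u : ℂ := ∏ j, z j ^ a j with hu
      set w : ℂ := ∏ j, z j ^ b j with hw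
      have hevalBin : ∀ ρ : ℂ,
          ((MvPolynomial.eval z) ∘ fun ρ => (MvPolynomial.monomial a 1 : MvPolynomial (Fin n) ℂ)
            - MvPolynomial.C ρ * MvPolynomial.monomial b 1) ρ = u - ρ * w := by
        intro ρ
        simp only [Function.comp_apply, map_sub, map_mul, MvPolynomial.eval_C,
          MvPolynomial.eval_monomial, one_mul]
        rw [Finsupp.prod_pow, Finsupp.prod_pow]
      rw [Multiset.map_congr rfl (fun ρ _ => hevalBin ρ)]
      rw [Finset.mul_sum]
      have hterm : ∀ α ∈ q.support,
          (∏ j, z j ^ ((TN • b) j)) * (MvPolynomial.coeff α q * ∏ j, z j ^ α j)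
          = (∏ j, z j ^ α₀ j) * (MvPolynomial.coeff α q * u ^ τ α * w ^ (TN - τ α)) := by
        intro α hα
        have hprodeq : (∏ j, z j ^ ((TN • b) j)) * (∏ j, z j ^ α j)
            = (∏ j, z j ^ α₀ j) * (u ^ τ α * w ^ (TN - τ α)) := by
          rw [hu, hw, ← Finset.prod_pow, ← Finset.prod_pow, ← Finset.prod_mul_distrib,
            ← Finset.prod_mul_distrib, ← Finset.prod_mul_distrib]
          refine Finset.prod_congr rfl fun j _ => ?_
          have hxp : (TN • b) j + α j = α₀ j + (a j * τ α + b j * (TN - τ α)) := by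
            have h1 := hform α hα j
            have h2 := hab j
            have hsm : (TN • b) j = TN * b j := rfl
            rw [hsm]
            zify [hτle α hα]
            rw [hTNT]
            linear_combination h1 - (τ α : ℤ) * h2
          calc z j ^ ((TN • b) j) * z j ^ α j
              = z j ^ ((TN • b) j + α j) := (pow_add _ _ _).symm
            _ = z j ^ (α₀ j + (a j * τ α + b j * (TN - τ α))) := by rw [hxp]
            _ = z j ^ α₀ j * ((z j ^ a j) ^ τ α * (z j ^ b j) ^ (TN - τ α)) := by
                rw [pow_add, pow_add, pow_mul, pow_mul]
        calc (∏ j, z j ^ ((TN • b) j)) * (MvPolynomial.coeff α q * ∏ j, z j ^ α j)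
            = ((∏ j, z j ^ ((TN • b) j)) * (∏ j, z j ^ α j)) * MvPolynomial.coeff α q := by ring
          _ = ((∏ j, z j ^ α₀ j) * (u ^ τ α * w ^ (TN - τ α))) * MvPolynomial.coeff α q := by
              rw [hprodeq]
          _ = (∏ j, z j ^ α₀ j) * (MvPolynomial.coeff α q * u ^ τ α * w ^ (TN - τ α)) := by ring
      rw [Finset.sum_congr rfl hterm, ← Finset.mul_sum, hid u w]
      ring
    -- divisibility
    have hqdvd : q ∣ MvPolynomial.C (MvPolynomial.coeff α₂ q) * (MvPolynomial.monomial α₀ 1 *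
        (M.map fun ρ => (MvPolynomial.monomial a 1 : MvPolynomial (Fin n) ℂ)
          - MvPolynomial.C ρ * MvPolynomial.monomial b 1).prod) := by
      rw [← hP]
      exact dvd_mul_left q _
    have hqprime : Prime q := UniqueFactorizationMonoid.irreducible_iff_prime.mp hirr
    -- spread of q
    have hWdiff : W α₂ - W α₀ = (T : ℝ) * ((g : ℝ) * c) := by
      have h1 : W α₂ - W α₀ = (T:ℝ) * ∑ j, (v j : ℝ) * ℓ j := by
        rw [Finset.mul_sum]
        show (∑ j, (α₂ j : ℝ) * ℓ j) - (∑ j, (α₀ j : ℝ) * ℓ j) = _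
        rw [← Finset.sum_sub_distrib]
        refine Finset.sum_congr rfl fun j _ => ?_
        have h2 := hα₂line j
        have h3 : (α₂ j : ℝ) = (α₀ j : ℝ) + (T:ℝ) * (v j : ℝ) := by exact_mod_cast h2
        linear_combination ℓ j * h3
      rw [h1, hgv]
    have hT2R : (2:ℝ) ≤ (T:ℝ) := by exact_mod_cast hTge2
    rcases hqprime.2.2 _ _ hqdvd with hd | hd
    · -- q divides a constant
      have hCne : (MvPolynomial.C (MvPolynomial.coeff α₂ q) : MvPolynomial (Fin n) ℂ) ≠ 0 := by
        intro h0
        exact hcα₂ (by rw [← MvPolynomial.C_inj ℂ, h0, map_zero])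
      obtain ⟨y1, hy1, y2, hy2, hlediff⟩ := aux_spread_le W hWadd hWinj hCne hd hα₀S hα₂S
      rw [MvPolynomial.C_apply, MvPolynomial.support_monomial, if_neg hcα₂] at hy1 hy2
      rw [Finset.mem_singleton.mp hy1, Finset.mem_singleton.mp hy2] at hlediff
      rw [hWdiff] at hlediff
      nlinarith
    rcases hqprime.2.2 _ _ hd with hd2 | hd2
    · -- q divides monomial α₀ 1
      have hmone : (MvPolynomial.monomial α₀ (1:ℂ) : MvPolynomial (Fin n) ℂ) ≠ 0 := by
        intro h0
        have := congrArg (MvPolynomial.coeff α₀) h0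
        rw [MvPolynomial.coeff_monomial, if_pos rfl, MvPolynomial.coeff_zero] at this
        exact one_ne_zero this
      obtain ⟨y1, hy1, y2, hy2, hlediff⟩ := aux_spread_le W hWadd hWinj hmone hd2 hα₀S hα₂S
      rw [MvPolynomial.support_monomial, if_neg one_ne_zero] at hy1 hy2
      rw [Finset.mem_singleton.mp hy1, Finset.mem_singleton.mp hy2] at hlediff
      rw [hWdiff] at hlediff
      nlinarith
    · -- q divides one of the binomials
      obtain ⟨Bin, hBinM, hqBin⟩ := hqprime.exists_mem_multiset_dvd hd2
      obtain ⟨ρ, hρM, rfl⟩ := Multiset.mem_map.mp hBinM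
      have hρ0 : ρ ≠ 0 := hM0 ρ hρM
      have habne : a ≠ b := by
        intro hab'
        have h1 : a j₀ = b j₀ := by rw [hab']
        rw [haj, hbj] at h1
        omega
      have hcoeffBin : ∀ y, MvPolynomial.coeff y
          ((MvPolynomial.monomial a 1 : MvPolynomial (Fin n) ℂ)
            - MvPolynomial.C ρ * MvPolynomial.monomial b 1)
          = (if a = y then (1:ℂ) else 0) - ρ * (if b = y then 1 else 0) := by
        intro y
        rw [MvPolynomial.coeff_sub, MvPolynomial.coeff_C_mul, MvPolynomial.coeff_monomial,
          MvPolynomial.coeff_monomial]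
      have hBinne : ((MvPolynomial.monomial a 1 : MvPolynomial (Fin n) ℂ)
          - MvPolynomial.C ρ * MvPolynomial.monomial b 1) ≠ 0 := by
        intro h0
        have := congrArg (MvPolynomial.coeff a) h0
        rw [hcoeffBin, MvPolynomial.coeff_zero, if_pos rfl,
          if_neg (fun hh => habne hh.symm)] at this
        simp at this
      have hBinsupp : ((MvPolynomial.monomial a 1 : MvPolynomial (Fin n) ℂ)
          - MvPolynomial.C ρ * MvPolynomial.monomial b 1).support ⊆ {a, b} := by
        intro y hy
        rw [MvPolynomial.mem_support_iff, hcoeffBin] at hy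
        by_contra hnot
        rw [Finset.mem_insert, Finset.mem_singleton] at hnot
        push_neg at hnot
        rw [if_neg (fun hh => hnot.1 hh.symm), if_neg (fun hh => hnot.2 hh.symm)] at hy
        simp at hy
      obtain ⟨y1, hy1, y2, hy2, hlediff⟩ := aux_spread_le W hWadd hWinj hBinne hqBin hα₀S hα₂S
      have hWab : W a - W b = (g:ℝ) * c := by
        rw [← hgv]
        show (∑ j, (a j : ℝ) * ℓ j) - (∑ j, (b j : ℝ) * ℓ j) = _
        rw [← Finset.sum_sub_distrib]
        refine Finset.sum_congr rfl fun j _ => ?_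
        have h2 := hab j
        have h3 : (a j : ℝ) - (b j : ℝ) = (v j : ℝ) := by exact_mod_cast h2
        linear_combination ℓ j * h3
      have hy1' := hBinsupp hy1
      have hy2' := hBinsupp hy2
      rw [Finset.mem_insert, Finset.mem_singleton] at hy1' hy2'
      have hbound : W y2 - W y1 ≤ (g:ℝ) * c := by
        rcases hy1' with rfl | rfl <;> rcases hy2' with h | h <;> rw [h] <;> linarith
      rw [hWdiff] at hlediff
      nlinarith
  have h0C : q.support.card ≠ 0 := by
    intro h0
    exact hsuppne.ne_empty (Finset.card_eq_zero.mp h0)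
  omega
end
end

section
/- Let p ∈ LY_d(n) be a binomial (exactly two monomials with nonzero coefficients) normalized so that p(0,…,0) = 1. Then there exists φ ∈ ℝ such that p(z_1,…,z_n) = 1 − e^{−iφ} z_1^{d_1}⋯z_n^{d_n}. Consequently, for every ℓ ∈ ℝ^n with all entries positive, every zero of f_{p,ℓ} has multiplicity 1 and the zero set of f_{p,ℓ} equals the arithmetic progression {(φ + 2πk)/⟨d,ℓ⟩ : k ∈ ℤ}. -/
open MeasureTheory Filter Topology

noncomputable section

/-- A binomial `p ∈ LY_d(n)` with `p(0,…,0) = 1` has the form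
`p(z) = 1 − e^{−iφ} z_1^{d_1}⋯z_n^{d_n}` for some `φ ∈ ℝ`; consequently, for every positive
`ℓ`, every zero of `f_{p,ℓ}` is simple and the zero set is the arithmetic progression
`{(φ + 2πk)/⟨d,ℓ⟩ : k ∈ ℤ}`. -/
theorem stmt_15 {n : ℕ} (d : Fin n → ℕ) (hd : ∀ j, 1 ≤ d j)
    (p : MvPolynomial (Fin n) ℂ) (hp : LeeYang p) (hdeg : ∀ j, p.degreeOf j = d j)
    (hbin : p.support.card = 2)
    (hnorm : MvPolynomial.eval (fun _ => (0 : ℂ)) p = 1) :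
    ∃ φ : ℝ,
      p = 1 - MvPolynomial.C (Complex.exp (-(Complex.I * (φ : ℂ)))) *
            ∏ j, MvPolynomial.X j ^ d j ∧
      ∀ ℓ : Fin n → ℝ, (∀ j, 0 < ℓ j) →
        (∀ t : ℝ, fpl p ℓ t = 0 → mult p ℓ t = 1) ∧
        {t : ℝ | fpl p ℓ t = 0} =
          {t : ℝ | ∃ k : ℤ, t = (φ + 2 * Real.pi * k) / (∑ j, (d j : ℝ) * ℓ j)} := by

  classical
  -- constant coefficient is 1
  have h0 : MvPolynomial.coeff 0 p = 1 := by
    have := hnorm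
    rw [show (fun _ => (0:ℂ)) = ((0 : Fin n → ℂ)) from rfl, MvPolynomial.eval_zero] at this
    exact this
  have h0mem : (0 : Fin n →₀ ℕ) ∈ p.support := by
    rw [MvPolynomial.mem_support_iff, h0]; exact one_ne_zero
  obtain ⟨u, v, huv, hsupp⟩ := Finset.card_eq_two.mp hbin
  obtain ⟨a, ha, hsupp'⟩ : ∃ a : Fin n →₀ ℕ, a ≠ 0 ∧ p.support = {0, a} := by
    have h0' : u = 0 ∨ v = 0 := by
      rw [hsupp] at h0mem
      rcases Finset.mem_insert.mp h0mem with h | h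
      · exact Or.inl h.symm
      · exact Or.inr (Finset.mem_singleton.mp h).symm
    rcases h0' with h | h
    · exact ⟨v, by rintro rfl; exact huv (h.trans rfl), by rw [hsupp, h]⟩
    · exact ⟨u, by rintro rfl; exact huv (h.symm ▸ rfl), by rw [hsupp, h, Finset.pair_comm]⟩
  set c : ℂ := MvPolynomial.coeff a p with hcdef
  have hc : c ≠ 0 := by
    rw [hcdef, ← MvPolynomial.mem_support_iff, hsupp']; simp
  have h0a : (0 : Fin n →₀ ℕ) ∉ ({a} : Finset (Fin n →₀ ℕ)) := by
    simp [Ne.symm ha]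
  have hpsum : p = MvPolynomial.monomial 0 1 + MvPolynomial.monomial a c := by
    conv_lhs => rw [p.as_sum]
    rw [hsupp', Finset.sum_insert h0a, Finset.sum_singleton, h0]
  have had : ∀ j, a j = d j := by
    intro j
    have h := hdeg j
    rw [MvPolynomial.degreeOf_eq_sup, hsupp'] at h
    simpa using h
  -- a positive coordinate
  obtain ⟨j₀, hj₀⟩ : ∃ j, a j ≠ 0 := by
    by_contra h; push_neg at h
    exact ha (Finsupp.ext fun j => h j)
  -- evaluation formula
  have heval : ∀ z : Fin n → ℂ, MvPolynomial.eval z p = 1 + c * ∏ j, z j ^ d j := by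
    intro z
    rw [hpsum, map_add, MvPolynomial.eval_monomial, MvPolynomial.eval_monomial,
      Finsupp.prod_fintype _ _ (fun i => pow_zero _),
      Finsupp.prod_fintype _ _ (fun i => pow_zero _)]
    simp [had]
  set D : ℕ := ∑ j, d j with hDdef
  have hD : D ≠ 0 := by
    have : d j₀ ≤ D := Finset.single_le_sum (f := fun j => d j) (fun _ _ => Nat.zero_le _)
      (Finset.mem_univ j₀)
    have := hd j₀
    omega
  -- |c| = 1
  have habs : ‖c‖ = 1 := by
    by_contra hne
    set v : ℂ := -c⁻¹ with hv
    have hv0 : v ≠ 0 := by simp [hv, hc]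
    set w : ℂ := Complex.exp (((1 / D : ℝ) : ℂ) * Complex.log v) with hw
    have hwD : w ^ D = v := by
      rw [hw, ← Complex.exp_nat_mul]
      have hD' : ((D : ℕ) : ℂ) ≠ 0 := Nat.cast_ne_zero.mpr hD
      rw [show ((D : ℕ) : ℂ) * (((1 / D : ℝ) : ℂ) * Complex.log v) = Complex.log v by
        push_cast; field_simp]
      exact Complex.exp_log hv0
    have hweval : MvPolynomial.eval (fun _ => w) p = 0 := by
      rw [heval, Finset.prod_pow_eq_pow_sum, ← hDdef, hwD, hv]
      field_simp
      norm_num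
    have habsw : ‖w‖ = Real.exp ((1 / D : ℝ) * Real.log ‖v‖) := by
      rw [hw, Complex.norm_exp, Complex.re_ofReal_mul, Complex.log_re]
    have hvabs : ‖v‖ = ‖c‖⁻¹ := by
      rw [hv, norm_neg, norm_inv]
    have hDpos : (0:ℝ) < (D:ℝ) := by positivity
    rcases lt_or_gt_of_ne hne with hlt | hgt
    · -- |c| < 1, so |v| > 1, |w| > 1
      have h1 : 1 < ‖v‖ := by
        rw [hvabs]; exact (one_lt_inv₀ (norm_pos_iff.mpr hc)).mpr hlt
      have : 1 < ‖w‖ := by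
        rw [habsw, Real.one_lt_exp_iff]
        exact mul_pos (one_div_pos.mpr hDpos) (Real.log_pos h1)
      exact hp.2 (fun _ => w) (fun _ => this) hweval
    · have h1 : ‖v‖ < 1 := by
        rw [hvabs]
        exact inv_lt_one_of_one_lt₀ hgt
      have h2 : 0 < ‖v‖ := norm_pos_iff.mpr hv0
      have : ‖w‖ < 1 := by
        rw [habsw, Real.exp_lt_one_iff]
        have hlog := Real.log_neg h2 h1
        have : (0:ℝ) < 1 / D := one_div_pos.mpr hDpos
        nlinarith
      exact hp.1 (fun _ => w) (fun _ => this) hweval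
  set φ : ℝ := Real.pi - Complex.arg c with hφdef
  have hcφ : Complex.exp (-(Complex.I * (φ : ℂ))) = -c := by
    have hc1 : Complex.exp ((Complex.arg c : ℂ) * Complex.I) = c := by
      have := Complex.norm_mul_exp_arg_mul_I c
      rwa [habs, Complex.ofReal_one, one_mul] at this
    rw [show -(Complex.I * ((φ : ℝ) : ℂ)) = (Complex.arg c : ℂ) * Complex.I
        - (Real.pi : ℂ) * Complex.I by rw [hφdef]; push_cast; ring,
      Complex.exp_sub, hc1, Complex.exp_pi_mul_I]
    field_simp
  have hP : p = 1 - MvPolynomial.C (Complex.exp (-(Complex.I * (φ : ℂ)))) *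
      ∏ j, MvPolynomial.X j ^ d j := by
    rw [hcφ, hpsum]
    have hmon : (MvPolynomial.monomial a c : MvPolynomial (Fin n) ℂ)
        = MvPolynomial.C c * ∏ j, MvPolynomial.X j ^ d j := by
      rw [MvPolynomial.monomial_eq, Finsupp.prod_fintype _ _ (fun i => pow_zero _)]
      simp [had]
    rw [hmon, map_neg]
    simp [MvPolynomial.monomial_zero']
  refine ⟨φ, hP, ?_⟩
  intro ℓ hℓ
  set L : ℝ := ∑ j, (d j : ℝ) * ℓ j with hLdef
  have hL : 0 < L := by
    rw [hLdef]
    apply Finset.sum_pos' (fun j _ => mul_nonneg (Nat.cast_nonneg _) (hℓ j).le)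
      ⟨j₀, Finset.mem_univ j₀, ?_⟩
    have h1 : (1:ℝ) ≤ (d j₀ : ℝ) := by exact_mod_cast hd j₀
    have := hℓ j₀
    nlinarith
  have hfpl : ∀ x : ℂ, fpl p ℓ x = 1 + c * Complex.exp (Complex.I * x * (L : ℂ)) := by
    intro x
    rw [fpl, heval]
    congr 2
    calc ∏ j, Complex.exp (Complex.I * x * (ℓ j : ℂ)) ^ d j
        = ∏ j, Complex.exp ((d j : ℂ) * (Complex.I * x * (ℓ j : ℂ))) :=
          Finset.prod_congr rfl fun j _ => (Complex.exp_nat_mul _ _).symm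
      _ = Complex.exp (∑ j, (d j : ℂ) * (Complex.I * x * (ℓ j : ℂ))) :=
          (Complex.exp_sum _ _).symm
      _ = Complex.exp (Complex.I * x * (L : ℂ)) := by
          congr 1
          rw [hLdef]
          push_cast
          rw [Finset.mul_sum]
          exact Finset.sum_congr rfl fun j _ => by ring
  have hexp : ∀ t : ℝ, Complex.exp (Complex.I * (t : ℂ) * (L : ℂ) - Complex.I * (φ : ℂ))
      = -(c * Complex.exp (Complex.I * (t : ℂ) * (L : ℂ))) := by
    intro t
    rw [Complex.exp_sub, div_eq_mul_inv, ← Complex.exp_neg, hcφ]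
    ring
  have hzero : ∀ t : ℝ, (fpl p ℓ (t : ℂ) = 0 ↔
      ∃ k : ℤ, t = (φ + 2 * Real.pi * k) / L) := by
    intro t
    rw [hfpl]
    constructor
    · intro h
      have h1 : Complex.exp (Complex.I * (t : ℂ) * (L : ℂ) - Complex.I * (φ : ℂ)) = 1 := by
        rw [hexp]; linear_combination -h
      obtain ⟨k, hk⟩ := Complex.exp_eq_one_iff.mp h1
      refine ⟨k, ?_⟩
      have h2 : ((t * L - φ : ℝ) : ℂ) = ((2 * Real.pi * k : ℝ) : ℂ) := by
        apply mul_left_cancel₀ Complex.I_ne_zero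
        push_cast
        linear_combination hk
      have h3 : t * L - φ = 2 * Real.pi * k := by exact_mod_cast h2
      field_simp
      linarith
    · rintro ⟨k, rfl⟩
      have h1 : Complex.I * (((φ + 2 * Real.pi * k) / L : ℝ) : ℂ) * (L : ℂ)
          - Complex.I * (φ : ℂ) = (k : ℂ) * (2 * (Real.pi : ℂ) * Complex.I) := by
        have hL0 : (L : ℂ) ≠ 0 := by exact_mod_cast hL.ne'
        push_cast
        field_simp
        ring
      have h2 : Complex.exp (Complex.I * (((φ + 2 * Real.pi * k) / L : ℝ) : ℂ) * (L : ℂ)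
          - Complex.I * (φ : ℂ)) = 1 := Complex.exp_eq_one_iff.mpr ⟨k, h1⟩
      have h3 := hexp ((φ + 2 * Real.pi * k) / L)
      rw [h2] at h3
      linear_combination h3
  constructor
  · intro t ht
    have hFfun : fpl p ℓ = fun x => 1 + c * Complex.exp (Complex.I * x * (L : ℂ)) :=
      funext hfpl
    have hderiv : HasDerivAt (fpl p ℓ)
        (c * (Complex.exp (Complex.I * (t : ℂ) * (L : ℂ)) * (Complex.I * (L : ℂ)))) (t : ℂ) := by
      rw [hFfun]
      have h1 : HasDerivAt (fun y : ℂ => Complex.I * y * (L : ℂ)) (Complex.I * (L : ℂ)) (t : ℂ) := by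
        have h := (hasDerivAt_id ((t : ℝ) : ℂ)).const_mul (Complex.I * (L : ℂ))
        convert h using 1
        · rfl
        · rfl
        · funext y; simp only [id]; ring
        · simp
      exact ((h1.cexp).const_mul c).const_add 1
    have hd1 : iteratedDeriv 1 (fpl p ℓ) (t : ℂ) ≠ 0 := by
      rw [iteratedDeriv_one, hderiv.deriv]
      have hL0 : ((L : ℝ) : ℂ) ≠ 0 := by exact_mod_cast hL.ne'
      exact mul_ne_zero hc (mul_ne_zero (Complex.exp_ne_zero _)
        (mul_ne_zero Complex.I_ne_zero hL0))
    have hd0 : ¬ (iteratedDeriv 0 (fpl p ℓ) (t : ℂ) ≠ 0) := by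
      rw [iteratedDeriv_zero]; simpa using ht
    have h1mem : 1 ∈ {k : ℕ | iteratedDeriv k (fpl p ℓ) (t : ℂ) ≠ 0} := hd1
    have hle : sInf {k : ℕ | iteratedDeriv k (fpl p ℓ) (t : ℂ) ≠ 0} ≤ 1 := Nat.sInf_le h1mem
    have hne0 : sInf {k : ℕ | iteratedDeriv k (fpl p ℓ) (t : ℂ) ≠ 0} ≠ 0 := by
      intro h
      exact hd0 (h ▸ Nat.sInf_mem ⟨1, h1mem⟩)
    rw [mult]
    omega
  · ext t
    simp only [Set.mem_setOf_eq]
    exact hzero t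
end
end

section
/- Let 0 ≤ m ≤ n − 2, let B ∈ ℤ^{n×m} be an integer matrix of rank m, let H = {exp(By) : y ∈ ℂ^m} ⊂ (ℂ*)^n (coordinatewise exponential), let z₀ = exp(x₀) ∈ (ℂ*)^n for some x₀ ∈ ℂ^n, and let ℓ ∈ ℝ^n have entries that are linearly independent over ℚ. Then there is at most one k ∈ ℝ such that (e^{ikℓ_1},…,e^{ikℓ_n}) ∈ z₀H, where z₀H = {exp(x₀ + By) : y ∈ ℂ^m}. -/
noncomputable section

/-- Let `0 ≤ m ≤ n − 2`, let `B ∈ ℤ^{n×m}` have rank `m` (its columns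
are linearly independent over `ℚ`), let `z₀H = {exp(x₀ + By) : y ∈ ℂ^m}` be a coset of the
algebraic torus `H = {exp(By) : y ∈ ℂ^m} ⊆ (ℂ*)^n`, and let `ℓ ∈ ℝ^n` have `ℚ`-linearly
independent entries. Then there is at most one `k ∈ ℝ` with
`(e^{ikℓ_1},…,e^{ikℓ_n}) ∈ z₀H`. -/
theorem stmt_18 {n m : ℕ} (hm : m + 2 ≤ n)
    (B : Matrix (Fin n) (Fin m) ℤ)
    (hB : LinearIndependent ℚ (fun i : Fin m => fun j : Fin n => (B j i : ℚ)))
    (x₀ : Fin n → ℂ)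
    (ℓ : Fin n → ℝ) (hind : LinearIndependent ℚ ℓ)
    (k k' : ℝ)
    (hk : ∃ y : Fin m → ℂ, ∀ j : Fin n,
      Complex.exp (Complex.I * (k : ℂ) * (ℓ j : ℂ)) =
        Complex.exp (x₀ j + ∑ i, (B j i : ℂ) * y i))
    (hk' : ∃ y : Fin m → ℂ, ∀ j : Fin n,
      Complex.exp (Complex.I * (k' : ℂ) * (ℓ j : ℂ)) =
        Complex.exp (x₀ j + ∑ i, (B j i : ℂ) * y i)) :
    k = k' := by
  by_contra hne
  obtain ⟨y, hy⟩ := hk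
  obtain ⟨y', hy'⟩ := hk'
  set u : Fin m → ℝ := fun i => (y i - y' i).im with hu
  have key : ∀ j : Fin n, ∃ c : ℤ,
      (k - k') * ℓ j = (∑ i, (B j i : ℝ) * u i) + c * (2 * Real.pi) := by
    intro j
    have h3 : Complex.exp (Complex.I * k * ℓ j - Complex.I * k' * ℓ j)
        = Complex.exp ((x₀ j + ∑ i, (B j i:ℂ) * y i) - (x₀ j + ∑ i, (B j i:ℂ) * y' i)) := by
      rw [Complex.exp_sub, Complex.exp_sub, hy j, hy' j]
    obtain ⟨c, hc⟩ := Complex.exp_eq_exp_iff_exists_int.mp h3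
    refine ⟨c, ?_⟩
    have him := congrArg Complex.im hc
    simp [Complex.sub_im, Complex.add_im, Complex.mul_im, Complex.I_im, Complex.I_re,
      Complex.im_sum, Complex.ofReal_im, Complex.ofReal_re, ← Finset.sum_sub_distrib] at him
    rw [sub_mul, him]
    congr 1
    apply Finset.sum_congr rfl
    intro i _
    simp only [hu, Complex.sub_im]; ring
  choose c hc using key
  set M : Matrix (Fin n) (Fin (m+1)) ℚ := fun j => Fin.snoc (fun i => (B j i : ℚ)) ((c j : ℚ)) with hM
  have hnotinj : ¬ Function.Injective (Matrix.vecMulLinear M) := by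
    intro h
    have h1 := LinearMap.finrank_le_finrank_of_injective h
    simp [Module.finrank_fin_fun] at h1
    omega
  obtain ⟨a, b, hab, hne'⟩ := Function.not_injective_iff.mp hnotinj
  set q : Fin n → ℚ := a - b with hq
  have hq0 : q ≠ 0 := sub_ne_zero_of_ne hne'
  have hker : Matrix.vecMulLinear M q = 0 := by
    rw [hq, map_sub, hab, sub_self]
  have hcol : ∀ i : Fin m, (∑ j, q j * (B j i : ℚ)) = 0 := by
    intro i
    have := congrFun hker (Fin.castSucc i)
    change ∑ j, q j * M j (Fin.castSucc i) = 0 at this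
    simpa [Matrix.vecMulLinear_apply, Matrix.vecMul, dotProduct, hM] using this
  have hlast : (∑ j, q j * (c j : ℚ)) = 0 := by
    have := congrFun hker (Fin.last m)
    change ∑ j, q j * M j (Fin.last m) = 0 at this
    simpa [Matrix.vecMulLinear_apply, Matrix.vecMul, dotProduct, hM] using this
  have hcolR : ∀ i : Fin m, (∑ j, (q j : ℝ) * (B j i : ℝ)) = 0 := by
    intro i
    have := congrArg (fun x : ℚ => (x : ℝ)) (hcol i)
    push_cast at this
    exact this
  have hlastR : (∑ j, (q j : ℝ) * (c j : ℝ)) = 0 := by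
    have := congrArg (fun x : ℚ => (x : ℝ)) hlast
    push_cast at this
    exact this
  have hsum : (k - k') * (∑ j, (q j : ℝ) * ℓ j) = 0 := by
    have e1 : (k - k') * (∑ j, (q j : ℝ) * ℓ j) = ∑ j, (q j : ℝ) * ((k - k') * ℓ j) := by
      rw [Finset.mul_sum]; apply Finset.sum_congr rfl; intros; ring
    have e2 : ∑ j, (q j : ℝ) * ∑ i, (B j i : ℝ) * u i
        = ∑ i, (∑ j, (q j : ℝ) * (B j i : ℝ)) * u i := by
      simp_rw [Finset.mul_sum, Finset.sum_mul, mul_assoc]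
      rw [Finset.sum_comm]
    calc (k - k') * (∑ j, (q j : ℝ) * ℓ j)
        = ∑ j, ((q j : ℝ) * ∑ i, (B j i : ℝ) * u i) + ∑ j, (q j : ℝ) * (c j : ℝ) * (2 * Real.pi) := by
          rw [e1, ← Finset.sum_add_distrib]
          apply Finset.sum_congr rfl
          intro j _
          rw [hc j]; ring
      _ = ∑ i, (∑ j, (q j : ℝ) * (B j i : ℝ)) * u i + (∑ j, (q j : ℝ) * (c j : ℝ)) * (2 * Real.pi) := by
          rw [e2, Finset.sum_mul]
      _ = 0 := by
          simp [hcolR, hlastR]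
  have hz : (∑ j, (q j : ℝ) * ℓ j) = 0 := by
    rcases mul_eq_zero.mp hsum with h | h
    · exact absurd (sub_eq_zero.mp h) hne
    · exact h
  have := Fintype.linearIndependent_iff.mp hind q (by
    simpa [Rat.smul_def] using hz)
  exact hq0 (funext this)
end
end
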